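/- Let G > 0, m ≠ 0, E₀ ∈ ℝ, and κ > 0 be real numbers, and define the metric factor A(r) = 1 − 2 G m / r − 2 G E₀ r^{κ−1} for r > 0. Then the Kretschmann scalar K(r) = ((r² A''(r))² + 4 (r A'(r))² + 4 (A(r) − 1)²) / r⁴ satisfies lim_{r→0⁺} r⁶ K(r) = 48 G² m². -/

import Mathlib

open Topology Filter

/-- Noncritical case of the curvature singularity relegation theorem: with metric factor
`A(r) = 1 − 2Gm/r − 2GE₀ r^{κ−1}` (`m = M − E ≠ 0`), the Kretschmann scalar satisfies
`r⁶ K(r) → 48 G² m²` as `r → 0⁺`: the Schwarzschild-type singularity. -/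
theorem stmt9 (G m E₀ κ : ℝ) (hG : 0 < G) (hm : m ≠ 0) (hκ : 0 < κ)
    (A : ℝ → ℝ) (hA : ∀ r : ℝ, 0 < r → A r = 1 - 2 * G * m / r - 2 * G * E₀ * r ^ (κ - 1))
    (K : ℝ → ℝ)
    (hK : ∀ r : ℝ, 0 < r → K r =
      ((r ^ 2 * deriv (deriv A) r) ^ 2 + 4 * (r * deriv A r) ^ 2 + 4 * (A r - 1) ^ 2) / r ^ 4) :
    Tendsto (fun r => r ^ 6 * K r) (𝓝[>] (0 : ℝ)) (𝓝 (48 * G ^ 2 * m ^ 2)) := by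
  set c : ℝ := 2 * G * E₀ with hc
  -- first derivative
  have hA' : ∀ r : ℝ, 0 < r →
      HasDerivAt A (2 * G * m / r ^ 2 - c * (κ - 1) * r ^ (κ - 2)) r := by
    intro r hr
    have h1 : HasDerivAt (fun x : ℝ => 2 * G * m / x) (2 * G * m * -(r ^ 2)⁻¹) r := by
      simpa [div_eq_mul_inv] using (hasDerivAt_inv hr.ne').const_mul (2 * G * m)
    have h2 : HasDerivAt (fun x : ℝ => c * x ^ (κ - 1)) (c * ((κ - 1) * r ^ (κ - 1 - 1))) r :=
      (Real.hasDerivAt_rpow_const (Or.inl hr.ne')).const_mul c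
    have h3 := ((hasDerivAt_const r (1 : ℝ)).sub h1).sub h2
    have heq : A =ᶠ[𝓝 r] fun x => 1 - 2 * G * m / x - c * x ^ (κ - 1) := by
      filter_upwards [isOpen_Ioi.mem_nhds hr] with x hx
      exact hA x hx
    have := h3.congr_of_eventuallyEq heq
    refine this.congr_deriv ?_
    have : κ - 1 - 1 = κ - 2 := by ring
    rw [this]
    field_simp
    ring
  have hderivA : ∀ r : ℝ, 0 < r →
      deriv A r = 2 * G * m / r ^ 2 - c * (κ - 1) * r ^ (κ - 2) := fun r hr =>
    (hA' r hr).deriv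
  -- second derivative
  have hA'' : ∀ r : ℝ, 0 < r →
      deriv (deriv A) r = -(4 * G * m) / r ^ 3 - c * (κ - 1) * ((κ - 2) * r ^ (κ - 3)) := by
    intro r hr
    have h1 : HasDerivAt (fun x : ℝ => 2 * G * m / x ^ 2)
        ((0 * r ^ 2 - 2 * G * m * (2 * r ^ 1)) / (r ^ 2) ^ 2) r :=
      (hasDerivAt_const r (2 * G * m)).div (hasDerivAt_pow 2 r) (pow_ne_zero 2 hr.ne')
    have h2 : HasDerivAt (fun x : ℝ => c * (κ - 1) * x ^ (κ - 2))
        (c * (κ - 1) * ((κ - 2) * r ^ (κ - 2 - 1))) r :=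
      (Real.hasDerivAt_rpow_const (Or.inl hr.ne')).const_mul (c * (κ - 1))
    have h3 := h1.sub h2
    have heq : deriv A =ᶠ[𝓝 r] fun x => 2 * G * m / x ^ 2 - c * (κ - 1) * x ^ (κ - 2) := by
      filter_upwards [isOpen_Ioi.mem_nhds hr] with x hx
      exact hderivA x hx
    have h4 := h3.congr_of_eventuallyEq heq
    rw [h4.deriv]
    have : κ - 2 - 1 = κ - 3 := by ring
    rw [this]
    field_simp
    ring
  -- limit
  set F : ℝ → ℝ := fun t =>
    (-(4 * G * m) - c * (κ - 1) * (κ - 2) * t) ^ 2 + 4 * (2 * G * m - c * (κ - 1) * t) ^ 2 +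
      4 * (-(2 * G * m) - c * t) ^ 2 with hF
  have hFc : Continuous F := by fun_prop
  have hrpow : Tendsto (fun r : ℝ => r ^ κ) (𝓝[>] (0 : ℝ)) (𝓝 0) := by
    have : ContinuousAt (fun r : ℝ => r ^ κ) 0 :=
      Real.continuousAt_rpow_const 0 κ (Or.inr hκ.le)
    have h0 : (0 : ℝ) ^ κ = 0 := Real.zero_rpow hκ.ne'
    simpa [h0] using this.continuousWithinAt.tendsto
  have hmain : Tendsto (fun r : ℝ => F (r ^ κ)) (𝓝[>] (0 : ℝ)) (𝓝 (48 * G ^ 2 * m ^ 2)) := by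
    have := (hFc.continuousAt (x := (0 : ℝ))).tendsto.comp hrpow
    have hF0 : F 0 = 48 * G ^ 2 * m ^ 2 := by simp [hF]; ring
    simpa [hF0, Function.comp_def] using this
  refine hmain.congr' ?_
  filter_upwards [self_mem_nhdsWithin] with r hr
  have hr : (0 : ℝ) < r := hr
  have e1 : r ^ (κ - 1) = r ^ κ / r := by
    rw [Real.rpow_sub hr, Real.rpow_one]
  have e2 : r ^ (κ - 2) = r ^ κ / r ^ 2 := by
    rw [Real.rpow_sub hr, show ((2:ℝ) = ((2:ℕ):ℝ)) by norm_num, Real.rpow_natCast]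
  have e3 : r ^ (κ - 3) = r ^ κ / r ^ 3 := by
    rw [Real.rpow_sub hr, show ((3:ℝ) = ((3:ℕ):ℝ)) by norm_num, Real.rpow_natCast]
  rw [hK r hr, hA r hr, hderivA r hr, hA'' r hr, e1, e2, e3, hF]
  field_simp
  ring
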